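/- Let U be a vector space, A(x₁,x₂) ∈ U[[x₁^{±1},x₂^{±1}]], and let p(x) be a nonzero polynomial with p(0) ≠ 0, with distinct roots α₁,…,α_r of multiplicities k₁,…,k_r. Then p(x₁/x₂)A(x₁,x₂) = 0 if and only if A(x₁,x₂) = Σ_{i=1}^r Σ_{j=0}^{k_i−1} ((α_i^{−j}/j!)(∂/∂x₂)^j x₁^{−1}δ(α_i x₂/x₁)) B_{i,j}(x₂) for some B_{i,j}(x) ∈ U[[x,x^{−1}]]; moreover the B_{i,j} are uniquely determined by A. -/

import Mathlib

/-- Coefficient function of `x₁⁻¹δ(βx₂/x₁) = Σ_{k∈ℤ} β^k x₂^k x₁^{−k−1}`. -/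
noncomputable def deltaTwo (β : ℂ) : ℤ → ℤ → ℂ :=
  fun i j => if i + j = -1 then β ^ j else 0

/-- The formal partial derivative `∂/∂x₂` on `ℂ[[x₁^{±1},x₂^{±1}]]`. -/
noncomputable def derX2 (F : ℤ → ℤ → ℂ) : ℤ → ℤ → ℂ :=
  fun i j => ((j : ℂ) + 1) * F i (j + 1)

/-- Multiplication of `A ∈ U[[x₁^{±1},x₂^{±1}]]` by the Laurent polynomial
`p(x₁/x₂) = Σ_s p_s x₁^s x₂^{−s}`. -/
noncomputable def polyLaurentAct {U : Type*} [AddCommGroup U] [Module ℂ U]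
    (p : Polynomial ℂ) (A : ℤ → ℤ → U) : ℤ → ℤ → U :=
  fun a b => ∑ s ∈ Finset.range (p.natDegree + 1), p.coeff s • A (a - s) (b + s)

/-- The product `((∂/∂x₂)^j x₁⁻¹δ(βx₂/x₁)) · B(x₂)` for a `U`-valued one-variable
series `B` (the sum over splittings of the `x₂`-exponent is finite). -/
noncomputable def deltaTerm {U : Type*} [AddCommGroup U] [Module ℂ U]
    (β : ℂ) (j : ℕ) (B : ℤ → U) : ℤ → ℤ → U :=
  fun a b => ∑ᶠ k : ℤ, (derX2^[j] (deltaTwo β)) a (b - k) • B k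

open Polynomial Finset

namespace Stmt7Aux

variable {U : Type*} [AddCommGroup U] [Module ℂ U]

/-- shift operator `(S f) a = f (a-1)` -/
def Sop (U : Type*) [AddCommGroup U] [Module ℂ U] : Module.End ℂ (ℤ → U) where
  toFun f := fun a => f (a - 1)
  map_add' := fun _ _ => rfl
  map_smul' := fun _ _ => rfl

lemma Sop_pow (n : ℕ) (f : ℤ → U) (a : ℤ) : ((Sop U ^ n) f) a = f (a - n) := by
  induction n generalizing a with
  | zero => simp
  | succ m ih =>
    rw [pow_succ', Module.End.mul_apply]
    show ((Sop U ^ m) f) (a - 1) = f (a - (m + 1 : ℕ))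
    rw [ih]
    congr 1; push_cast; ring

lemma aeval_Sop_apply (p : ℂ[X]) (f : ℤ → U) (a : ℤ) :
    (aeval (Sop U) p) f a = ∑ s ∈ range (p.natDegree + 1), p.coeff s • f (a - s) := by
  rw [Polynomial.aeval_eq_sum_range]
  simp only [LinearMap.sum_apply, LinearMap.smul_apply, Finset.sum_apply, Pi.smul_apply, Sop_pow]

lemma aeval_Sop_smul (q : ℂ[X]) (h : ℤ → ℂ) (w : U) :
    (aeval (Sop U) q) (fun a => h a • w) = fun a => ((aeval (Sop ℂ) q) h a) • w := by
  funext a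
  rw [aeval_Sop_apply, aeval_Sop_apply, Finset.sum_smul]
  exact Finset.sum_congr rfl fun s _ => (smul_assoc _ _ _).symm

/-- `ψ_j(a) = (a+1)(a+2)⋯(a+j)` -/
def psi (j : ℕ) (a : ℤ) : ℂ := ∏ s ∈ range j, ((a : ℂ) + s + 1)

noncomputable def gfun (α : ℂ) (j : ℕ) : ℤ → ℂ := fun a => psi j a * α ^ (-a)

lemma psi_succ_left (j : ℕ) (a : ℤ) : psi (j + 1) (a - 1) = (a : ℂ) * psi j a := by
  unfold psi
  have h : ∀ s : ℕ, (((a - 1 : ℤ) : ℂ) + s + 1) = (a : ℂ) + s := by intro s; push_cast; ring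
  calc ∏ s ∈ range (j + 1), (((a - 1 : ℤ) : ℂ) + s + 1)
      = ∏ s ∈ range (j + 1), ((a : ℂ) + s) := by
        exact Finset.prod_congr rfl fun s _ => h s
    _ = (∏ s ∈ range j, ((a : ℂ) + ((s:ℕ) + 1 : ℕ))) * ((a : ℂ) + (0:ℕ)) := Finset.prod_range_succ' _ _
    _ = (a : ℂ) * ∏ s ∈ range j, ((a : ℂ) + s + 1) := by
        push_cast
        rw [add_zero, mul_comm]
        congr 1
        exact Finset.prod_congr rfl fun s _ => by ring

lemma psi_succ_right (j : ℕ) (a : ℤ) : psi (j + 1) a = psi j a * ((a : ℂ) + j + 1) :=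
  Finset.prod_range_succ _ _

lemma aeval_X_sub_C_apply (μ : ℂ) (h : ℤ → ℂ) :
    (aeval (Sop ℂ) (X - C μ)) h = fun a => h (a - 1) - μ * h a := by
  funext a
  rw [map_sub, aeval_X, aeval_C, LinearMap.sub_apply]
  simp [Sop, Module.algebraMap_end_apply]

lemma zpow_neg_sub_one (α : ℂ) (hα : α ≠ 0) (a : ℤ) : α ^ (-(a - 1)) = α ^ (-a) * α := by
  rw [show -(a - 1) = -a + 1 by ring, zpow_add_one₀ hα]

lemma step_same {α : ℂ} (hα : α ≠ 0) (j : ℕ) :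
    (aeval (Sop ℂ) (X - C α)) (gfun α (j + 1)) = (-(j + 1 : ℂ) * α) • gfun α j := by
  rw [aeval_X_sub_C_apply]
  funext a
  show gfun α (j+1) (a-1) - α * gfun α (j+1) a = (-(j + 1 : ℂ) * α) * gfun α j a
  unfold gfun
  rw [psi_succ_left, psi_succ_right, zpow_neg_sub_one α hα]
  ring

lemma step_gen {α : ℂ} (hα : α ≠ 0) (μ : ℂ) :
    (aeval (Sop ℂ) (X - C μ)) (gfun α 0) = (α - μ) • gfun α 0 := by
  rw [aeval_X_sub_C_apply]
  funext a
  show gfun α 0 (a-1) - μ * gfun α 0 a = (α - μ) * gfun α 0 a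
  unfold gfun psi
  rw [zpow_neg_sub_one α hα]
  simp; ring

lemma kill_succ {α : ℂ} (hα : α ≠ 0) (j : ℕ) :
    (aeval (Sop ℂ) ((X - C α) ^ (j + 1))) (gfun α j) = 0 := by
  induction j with
  | zero =>
    rw [pow_one, step_gen hα α, sub_self, zero_smul]
  | succ m ih =>
    rw [pow_succ, map_mul, Module.End.mul_apply, step_same hα, map_smul, ih, smul_zero]

lemma kill_pow {α : ℂ} (hα : α ≠ 0) {j m : ℕ} (hjm : j < m) :
    (aeval (Sop ℂ) ((X - C α) ^ m)) (gfun α j) = 0 := by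
  obtain ⟨q, rfl⟩ : ∃ q, m = q + (j + 1) := ⟨m - (j + 1), by omega⟩
  rw [pow_add, map_mul, Module.End.mul_apply, kill_succ hα, map_zero]

lemma extract {α : ℂ} (hα : α ≠ 0) (j : ℕ) :
    (aeval (Sop ℂ) ((X - C α) ^ j)) (gfun α j)
      = (((-1) ^ j * (j.factorial : ℂ)) * α ^ j) • gfun α 0 := by
  induction j with
  | zero => simp
  | succ m ih =>
    rw [pow_succ, map_mul, Module.End.mul_apply, step_same hα, map_smul, ih, smul_smul]
    congr 1
    push_cast [Nat.factorial_succ]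
    ring

lemma pow_on_g0 {α : ℂ} (hα : α ≠ 0) (μ : ℂ) (n : ℕ) :
    (aeval (Sop ℂ) ((X - C μ) ^ n)) (gfun α 0) = ((α - μ) ^ n) • gfun α 0 := by
  induction n with
  | zero => simp
  | succ m ih =>
    rw [pow_succ, map_mul, Module.End.mul_apply, step_gen hα, map_smul, ih, smul_smul]
    congr 1; ring

lemma prod_on_g0 {α : ℂ} (hα : α ≠ 0) {ι : Type*} [DecidableEq ι] (s : Finset ι)
    (μ : ι → ℂ) (m : ι → ℕ) :
    (aeval (Sop ℂ) (∏ t ∈ s, (X - C (μ t)) ^ (m t))) (gfun α 0)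
      = (∏ t ∈ s, (α - μ t) ^ (m t)) • gfun α 0 := by
  induction s using Finset.induction_on with
  | empty => simp
  | insert _ _ hnotmem ih =>
    rename_i a s
    rw [Finset.prod_insert hnotmem, Finset.prod_insert hnotmem, map_mul, Module.End.mul_apply,
      ih, map_smul, pow_on_g0 hα, smul_smul]
    congr 1; ring


lemma aeval_killed {ρt : ℂ} (hρt : ρt ≠ 0) {n dt : ℕ} {D : ℂ[X]}
    (hdvd : (X - C ρt) ^ n ∣ D) (hlt : dt < n) :
    (aeval (Sop ℂ) D) (gfun ρt dt) = 0 := by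
  obtain ⟨q, rfl⟩ := hdvd
  rw [mul_comm, map_mul, Module.End.mul_apply, kill_pow hρt hlt, map_zero]

omit [Module ℂ U] in
lemma sum_fn_eq {ι : Type*} (s : Finset ι) (G : ι → ℤ → U) :
    (fun a => ∑ t ∈ s, G t a) = ∑ t ∈ s, G t := by
  funext a; rw [Finset.sum_apply]

lemma kernel_sum {ι : Type*} [Fintype ι] (ρ : ι → ℂ) (d : ι → ℕ) (hρ : ∀ t, ρ t ≠ 0)
    (p : ℂ[X]) (hdvd : ∀ t, (X - C (ρ t)) ^ (d t + 1) ∣ p) (w : ι → U) :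
    (aeval (Sop U) p) (fun a => ∑ t, gfun (ρ t) (d t) a • w t) = 0 := by
  rw [sum_fn_eq, map_sum]
  apply Finset.sum_eq_zero
  intro t _
  rw [aeval_Sop_smul, aeval_killed (hρ t) (hdvd t) (Nat.lt_succ_self _)]
  funext a; simp

lemma expand_aeval {ι : Type*} [Fintype ι] (ρ : ι → ℂ) (d : ι → ℕ) (D : ℂ[X]) (w : ι → U) :
    (aeval (Sop U) D) (fun a => ∑ t, gfun (ρ t) (d t) a • w t)
      = fun a => ∑ t, ((aeval (Sop ℂ) D) (gfun (ρ t) (d t))) a • w t := by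
  rw [sum_fn_eq, map_sum]
  funext a
  rw [Finset.sum_apply]
  exact Finset.sum_congr rfl fun t _ => by rw [aeval_Sop_smul]

lemma sum_gfun_eq_zero {ι : Type*} [Fintype ι] [DecidableEq ι] (ρ : ι → ℂ) (d : ι → ℕ)
    (hρ : ∀ t, ρ t ≠ 0) (hpair : ∀ t t', ρ t = ρ t' → d t = d t' → t = t')
    (w : ι → U) (hsum : (fun a => ∑ t, gfun (ρ t) (d t) a • w t) = 0) :
    ∀ t, w t = 0 := by
  set m : ι → ℕ :=
    fun t₀ => (univ.filter (fun t' => ρ t' = ρ t₀ ∧ d t₀ < d t')).card with hm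
  suffices H : ∀ n, ∀ t₀, m t₀ = n → w t₀ = 0 by exact fun t => H (m t) t rfl
  intro n
  induction n using Nat.strong_induction_on with
  | _ n ih =>
    intro t₀ hn
    set D : ℂ[X] := (X - C (ρ t₀)) ^ (d t₀) *
      ∏ t' ∈ univ.filter (fun t' => ρ t' ≠ ρ t₀), (X - C (ρ t')) ^ (d t' + 1) with hD
    have hDF : (fun a => ∑ t, ((aeval (Sop ℂ) D) (gfun (ρ t) (d t))) a • w t) = 0 := by
      rw [← expand_aeval, hsum, map_zero]
    have hDF0 := congrFun hDF 0
    simp only [Pi.zero_apply] at hDF0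
    -- the total scalar constant
    set Ctot : ℂ := ((-1) ^ (d t₀) * ((d t₀).factorial : ℂ)) * (ρ t₀) ^ (d t₀) *
      ∏ t' ∈ univ.filter (fun t' => ρ t' ≠ ρ t₀), (ρ t₀ - ρ t') ^ (d t' + 1) with hC
    have hval : (aeval (Sop ℂ) D) (gfun (ρ t₀) (d t₀)) = Ctot • gfun (ρ t₀) 0 := by
      rw [hD, mul_comm, map_mul, Module.End.mul_apply, extract (hρ t₀), map_smul,
        prod_on_g0 (hρ t₀), smul_smul, hC, mul_comm]
    have hCne : Ctot ≠ 0 := by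
      rw [hC]
      apply mul_ne_zero
      apply mul_ne_zero
      · exact mul_ne_zero (pow_ne_zero _ (by norm_num)) (Nat.cast_ne_zero.mpr (Nat.factorial_ne_zero _))
      · exact pow_ne_zero _ (hρ t₀)
      · rw [Finset.prod_ne_zero_iff]
        intro t' ht'
        rw [Finset.mem_filter] at ht'
        exact pow_ne_zero _ (sub_ne_zero.mpr (fun h => ht'.2 h.symm))
    have hmain : ∑ t, ((aeval (Sop ℂ) D) (gfun (ρ t) (d t))) 0 • w t = Ctot • w t₀ := by
      rw [Finset.sum_eq_single t₀]
      · rw [hval]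
        show (Ctot * gfun (ρ t₀) 0 0) • w t₀ = Ctot • w t₀
        congr 1
        simp [gfun, psi]
      · intro t _ hne
        by_cases h1 : ρ t = ρ t₀
        · rcases lt_trichotomy (d t) (d t₀) with h2 | h2 | h2
          · have : (aeval (Sop ℂ) D) (gfun (ρ t) (d t)) = 0 := by
              rw [h1]
              exact aeval_killed (hρ t₀) (Dvd.intro _ rfl) h2
            rw [this]; simp
          · exact absurd (hpair t t₀ h1 h2) hne
          · -- w t = 0 by induction
            have hlt : m t < n := by
              rw [← hn, hm]
              apply Finset.card_lt_card
              constructor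
              · intro t' ht'
                rw [Finset.mem_filter] at ht' ⊢
                exact ⟨ht'.1, ht'.2.1.trans h1, h2.trans ht'.2.2⟩
              · intro hsub
                have ht : t ∈ univ.filter (fun t' => ρ t' = ρ t₀ ∧ d t₀ < d t') := by
                  rw [Finset.mem_filter]; exact ⟨Finset.mem_univ _, h1, h2⟩
                have := hsub ht
                rw [Finset.mem_filter] at this
                exact lt_irrefl _ this.2.2
            rw [ih (m t) hlt t rfl, smul_zero]
        · have : (aeval (Sop ℂ) D) (gfun (ρ t) (d t)) = 0 := by
            apply aeval_killed (hρ t) _ (Nat.lt_succ_self _)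
            exact Dvd.dvd.mul_left
              (Finset.dvd_prod_of_mem (fun t' => (X - C (ρ t')) ^ (d t' + 1))
                (Finset.mem_filter.mpr ⟨Finset.mem_univ t, h1⟩)) _
          rw [this]; simp
      · intro h; exact absurd (Finset.mem_univ t₀) h
    rw [hmain] at hDF0
    exact (smul_eq_zero.mp hDF0).resolve_left hCne

lemma propagation (p : ℂ[X]) (h0 : p.coeff 0 ≠ 0) (hN : p.coeff p.natDegree ≠ 0)
    (f : ℤ → U) (hf : (aeval (Sop U) p) f = 0)
    (hwin : ∀ a : ℤ, 0 ≤ a → a < (p.natDegree : ℤ) → f a = 0) : f = 0 := by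
  set N := p.natDegree with hNdef
  have hrec : ∀ a : ℤ, ∑ s ∈ range (N + 1), p.coeff s • f (a - s) = 0 := by
    intro a
    rw [← aeval_Sop_apply, hf]; rfl
  have claim : ∀ m : ℕ, ∀ a : ℤ, -(m : ℤ) ≤ a → a < (N : ℤ) + m → f a = 0 := by
    intro m
    induction m with
    | zero => intro a h1 h2; exact hwin a (by omega) (by omega)
    | succ m ih =>
      intro a h1 h2
      by_cases hold : -(m : ℤ) ≤ a ∧ a < (N : ℤ) + m
      · exact ih a hold.1 hold.2
      · rcases (by omega : a = -(m : ℤ) - 1 ∨ a = (N : ℤ) + m) with ha | ha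
        · -- use recurrence at a + N
          have := hrec (a + N)
          rw [Finset.sum_range_succ] at this
          have hrest : ∑ s ∈ range N, p.coeff s • f (a + N - s) = 0 := by
            apply Finset.sum_eq_zero
            intro s hs
            rw [Finset.mem_range] at hs
            rw [ih (a + N - s) (by omega) (by omega), smul_zero]
          rw [hrest, zero_add] at this
          have harg : a + (N : ℤ) - (N : ℤ) = a := by ring
          rw [harg] at this
          exact (smul_eq_zero.mp this).resolve_left hN
        · -- use recurrence at a
          have := hrec a
          rw [Finset.sum_range_succ'] at this
          have hrest : ∑ s ∈ range N, p.coeff (s + 1) • f (a - ((s + 1 : ℕ) : ℤ)) = 0 := by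
            apply Finset.sum_eq_zero
            intro s hs
            rw [Finset.mem_range] at hs
            rw [ih (a - ((s + 1 : ℕ) : ℤ)) (by push_cast; omega) (by push_cast; omega), smul_zero]
          rw [hrest, zero_add] at this
          have harg : a - ((0 : ℕ) : ℤ) = a := by simp
          rw [harg] at this
          exact (smul_eq_zero.mp this).resolve_left h0
  funext a
  show f a = 0
  exact claim (a.natAbs + 1) a (by omega) (by omega)

lemma existence {ι : Type*} [Fintype ι] [DecidableEq ι] (ρ : ι → ℂ) (d : ι → ℕ)
    (hρ : ∀ t, ρ t ≠ 0) (hpair : ∀ t t', ρ t = ρ t' → d t = d t' → t = t')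
    (p : ℂ[X]) (hdvd : ∀ t, (X - C (ρ t)) ^ (d t + 1) ∣ p)
    (h0 : p.coeff 0 ≠ 0) (hN : p.coeff p.natDegree ≠ 0)
    (hcard : p.natDegree = Fintype.card ι)
    (f : ℤ → U) (hf : (aeval (Sop U) p) f = 0) :
    ∃ w : ι → U, f = fun a => ∑ t, gfun (ρ t) (d t) a • w t := by
  classical
  set e := Fintype.equivFin ι with he
  have hcover : ∀ a : ℤ, 0 ≤ a → a < (p.natDegree : ℤ) → ∃ s : ι, ((e s : ℕ) : ℤ) = a := by
    intro a h1 h2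
    refine ⟨e.symm ⟨a.toNat, by omega⟩, ?_⟩
    rw [Equiv.apply_symm_apply]
    simp [Int.toNat_of_nonneg h1]
  set M : Matrix ι ι ℂ := fun s t => gfun (ρ t) (d t) ((e s : ℕ) : ℤ) with hM
  have hdet : M.det ≠ 0 := by
    intro hdet0
    obtain ⟨cvec, hc0, hMc⟩ := Matrix.exists_mulVec_eq_zero_iff.mpr hdet0
    have hker : (aeval (Sop ℂ) p) (fun a => ∑ t, gfun (ρ t) (d t) a • cvec t) = 0 :=
      kernel_sum ρ d hρ p hdvd cvec
    have hwin : ∀ a : ℤ, 0 ≤ a → a < (p.natDegree : ℤ) →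
        (fun a => ∑ t, gfun (ρ t) (d t) a • cvec t) a = 0 := by
      intro a h1 h2
      obtain ⟨s, hs⟩ := hcover a h1 h2
      have := congrFun hMc s
      rw [Matrix.mulVec, Pi.zero_apply] at this
      rw [← hs]
      simpa [hM, dotProduct, smul_eq_mul] using this
    have hzero := propagation p h0 hN _ hker hwin
    have := sum_gfun_eq_zero ρ d hρ hpair cvec hzero
    exact hc0 (funext this)
  have hMinv : M * M⁻¹ = 1 := Matrix.mul_nonsing_inv M (isUnit_iff_ne_zero.mpr hdet)
  set v : ι → U := fun t => ∑ s, (M⁻¹ t s) • f ((e s : ℕ) : ℤ) with hv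
  refine ⟨v, ?_⟩
  set F : ℤ → U := fun a => ∑ t, gfun (ρ t) (d t) a • v t with hF
  have hFwin : ∀ s : ι, F ((e s : ℕ) : ℤ) = f ((e s : ℕ) : ℤ) := by
    intro s
    show ∑ t, gfun (ρ t) (d t) ((e s : ℕ) : ℤ) • v t = f ((e s : ℕ) : ℤ)
    calc ∑ t, gfun (ρ t) (d t) ((e s : ℕ) : ℤ) • v t
        = ∑ t, ∑ s', (M s t * M⁻¹ t s') • f ((e s' : ℕ) : ℤ) := by
          refine Finset.sum_congr rfl fun t _ => ?_
          rw [hv, Finset.smul_sum]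
          exact Finset.sum_congr rfl fun s' _ => by rw [smul_smul]
      _ = ∑ s', (∑ t, M s t * M⁻¹ t s') • f ((e s' : ℕ) : ℤ) := by
          rw [Finset.sum_comm]
          exact Finset.sum_congr rfl fun s' _ => by rw [Finset.sum_smul]
      _ = ∑ s', ((M * M⁻¹) s s') • f ((e s' : ℕ) : ℤ) := by
          refine Finset.sum_congr rfl fun s' _ => ?_
          rw [Matrix.mul_apply]
      _ = f ((e s : ℕ) : ℤ) := by
          rw [hMinv]
          simp [Matrix.one_apply]
  have hdiffker : (aeval (Sop U) p) (f - F) = 0 := by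
    rw [map_sub, hf, hF, kernel_sum ρ d hρ p hdvd v, sub_zero]
  have hdiffwin : ∀ a : ℤ, 0 ≤ a → a < (p.natDegree : ℤ) → (f - F) a = 0 := by
    intro a h1 h2
    obtain ⟨s, hs⟩ := hcover a h1 h2
    rw [← hs, Pi.sub_apply, hFwin s, sub_self]
  have := propagation p h0 hN (f - F) hdiffker hdiffwin
  have hfF : f = F := by
    funext a
    have := congrFun this a
    rw [Pi.sub_apply, Pi.zero_apply, sub_eq_zero] at this
    exact this
  rw [hfF, hF]


lemma derX2_iter (j : ℕ) (F : ℤ → ℤ → ℂ) (a m : ℤ) :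
    (derX2^[j] F) a m = (∏ t ∈ range j, ((m : ℂ) + t + 1)) * F a (m + j) := by
  induction j generalizing m with
  | zero => simp
  | succ n ih =>
    rw [Function.iterate_succ_apply']
    show ((m : ℂ) + 1) * (derX2^[n] F) a (m + 1) = _
    rw [ih]
    rw [show m + 1 + (n : ℤ) = m + ((n + 1 : ℕ) : ℤ) by push_cast; ring]
    rw [Finset.prod_range_succ']
    have : ∀ t ∈ range n, (((m + 1 : ℤ) : ℂ) + t + 1) = ((m : ℂ) + ((t:ℕ) + 1 : ℕ) + 1) := by
      intro t _; push_cast; ring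
    rw [Finset.prod_congr rfl this]
    push_cast
    ring

lemma prod_reflect (z : ℂ) (j : ℕ) :
    ∏ t ∈ range j, (-(z + j + 1) + t + 1) = (-1) ^ j * ∏ t ∈ range j, (z + t + 1) := by
  induction j generalizing z with
  | zero => simp
  | succ m ih =>
    rw [Finset.prod_range_succ]
    have h1 : ∀ t ∈ range m, (-(z + ((m + 1 : ℕ) : ℂ) + 1) + t + 1)
        = (-((z + 1) + (m : ℂ) + 1) + t + 1) := by
      intro t _; push_cast; ring
    rw [Finset.prod_congr rfl h1, ih (z + 1)]
    rw [Finset.prod_range_succ']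
    have h2 : ∀ t ∈ range m, ((z + 1) + (t : ℂ) + 1) = (z + ((t + 1 : ℕ) : ℂ) + 1) := by
      intro t _; push_cast; ring
    rw [Finset.prod_congr rfl h2]
    push_cast
    ring

lemma deltaTerm_eq (β : ℂ) (j : ℕ) (B : ℤ → U) (a b : ℤ) :
    deltaTerm β j B a b
      = (((-1) ^ j * psi j a) * β ^ (-a - 1)) • B (a + b + j + 1) := by
  unfold deltaTerm
  rw [finsum_eq_single _ (a + b + (j : ℤ) + 1) ?side]
  case side =>
    intro x hx
    rw [derX2_iter]
    unfold deltaTwo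
    rw [if_neg (by omega), mul_zero, zero_smul]
  rw [derX2_iter]
  unfold deltaTwo
  rw [if_pos (by omega : a + (b - (a + b + (j : ℤ) + 1) + (j : ℤ)) = -1)]
  rw [show b - (a + b + (j : ℤ) + 1) = -(a + (j : ℤ) + 1) by ring]
  rw [show -(a + (j : ℤ) + 1) + (j : ℤ) = -a - 1 by ring]
  congr 1
  have hc : ∀ t ∈ range j, (((-(a + (j : ℤ) + 1) : ℤ) : ℂ) + t + 1)
      = (-((a : ℂ) + (j : ℕ) + 1) + t + 1) := by
    intro t _; push_cast; ring
  rw [Finset.prod_congr rfl hc, prod_reflect ((a : ℂ)) j]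
  rfl


end Stmt7Aux


open Polynomial Finset Stmt7Aux

/-- let `p(x) = c ∏ᵢ (x − αᵢ)^{kᵢ}` be a nonzero polynomial with
`p(0) ≠ 0` (the `αᵢ` are its distinct nonzero roots, with multiplicities
`kᵢ ≥ 1`), and let `A ∈ U[[x₁^{±1},x₂^{±1}]]`.  Then `p(x₁/x₂)A(x₁,x₂) = 0` iff
`A = Σᵢ Σ_{j<kᵢ} ((αᵢ^{−j}/j!)(∂/∂x₂)^j x₁⁻¹δ(αᵢx₂/x₁)) B_{i,j}(x₂)` for some
series `B_{i,j}`, and the `B_{i,j}` are uniquely determined by `A`. -/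
theorem stmt_7 (U : Type*) [AddCommGroup U] [Module ℂ U]
    (A : ℤ → ℤ → U) (p : Polynomial ℂ) (r : ℕ)
    (α : Fin r → ℂ) (k : Fin r → ℕ) (c : ℂ)
    (hc : c ≠ 0) (hinj : Function.Injective α) (hα : ∀ i, α i ≠ 0)
    (hk : ∀ i, 0 < k i)
    (hp : p = Polynomial.C c * ∏ i, (Polynomial.X - Polynomial.C (α i)) ^ k i) :
    ((polyLaurentAct p A = fun _ _ => 0) ↔
      ∃ B : (i : Fin r) → Fin (k i) → ℤ → U,
        A = fun a b => ∑ i, ∑ j : Fin (k i),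
          ((α i) ^ (-((j : ℕ) : ℤ)) / (Nat.factorial (j : ℕ) : ℂ)) •
            deltaTerm (α i) (j : ℕ) (B i j) a b) ∧
    (∀ B B' : (i : Fin r) → Fin (k i) → ℤ → U,
      (A = fun a b => ∑ i, ∑ j : Fin (k i),
          ((α i) ^ (-((j : ℕ) : ℤ)) / (Nat.factorial (j : ℕ) : ℂ)) •
            deltaTerm (α i) (j : ℕ) (B i j) a b) →
      (A = fun a b => ∑ i, ∑ j : Fin (k i),
          ((α i) ^ (-((j : ℕ) : ℤ)) / (Nat.factorial (j : ℕ) : ℂ)) •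
            deltaTerm (α i) (j : ℕ) (B' i j) a b) →
      B = B') := by
  classical
  set ρ : (Σ i : Fin r, Fin (k i)) → ℂ := fun t => α t.1 with hρdef
  set d : (Σ i : Fin r, Fin (k i)) → ℕ := fun t => (t.2 : ℕ) with hddef
  set cst : (Σ i : Fin r, Fin (k i)) → ℂ :=
    fun t => ((-1) ^ (d t) * (ρ t) ^ (-(d t : ℤ)) / ((d t).factorial : ℂ)) * (ρ t)⁻¹ with hcstdef
  have hρ : ∀ t, ρ t ≠ 0 := fun t => hα t.1
  have hpair : ∀ t t', ρ t = ρ t' → d t = d t' → t = t' := by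
    rintro ⟨i, j⟩ ⟨i', j'⟩ h1 h2
    have hii : i = i' := hinj h1
    subst hii
    have : j = j' := Fin.ext h2
    subst this
    rfl
  have hdvd : ∀ t, ((X : ℂ[X]) - C (ρ t)) ^ (d t + 1) ∣ p := by
    rintro ⟨i, j⟩
    rw [hp]
    have h1 : ((X : ℂ[X]) - C (α i)) ^ ((j : ℕ) + 1) ∣ ((X : ℂ[X]) - C (α i)) ^ (k i) :=
      pow_dvd_pow _ (Nat.succ_le_of_lt j.isLt)
    exact Dvd.dvd.mul_left (h1.trans (Finset.dvd_prod_of_mem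
      (fun i' => ((X : ℂ[X]) - C (α i')) ^ (k i')) (Finset.mem_univ i))) _
  have hNdeg : p.natDegree = ∑ i, k i := by
    rw [hp, natDegree_C_mul hc, natDegree_prod]
    · exact Finset.sum_congr rfl fun i _ => by rw [natDegree_pow, natDegree_X_sub_C, mul_one]
    · intro i _; exact pow_ne_zero _ (X_sub_C_ne_zero (α i))
  have hcard : p.natDegree = Fintype.card (Σ i : Fin r, Fin (k i)) := by
    rw [hNdeg]
    simp [Fintype.card_sigma]
  have h0 : p.coeff 0 ≠ 0 := by
    rw [Polynomial.coeff_zero_eq_eval_zero, hp]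
    simp only [eval_mul, eval_C, eval_prod, eval_pow, eval_sub, eval_X, zero_sub]
    exact mul_ne_zero hc
      (Finset.prod_ne_zero_iff.mpr fun i _ => pow_ne_zero _ (neg_ne_zero.mpr (hα i)))
  have hpne : p ≠ 0 := by
    rw [hp]
    exact mul_ne_zero (C_ne_zero.mpr hc)
      (monic_prod_of_monic _ _ fun i _ => (monic_X_sub_C (α i)).pow (k i)).ne_zero
  have hN : p.coeff p.natDegree ≠ 0 := by
    rw [← Polynomial.leadingCoeff]
    exact leadingCoeff_ne_zero.mpr hpne
  have hcstne : ∀ t, cst t ≠ 0 := by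
    intro t
    apply mul_ne_zero
    · apply div_ne_zero
      · exact mul_ne_zero (pow_ne_zero _ (by norm_num : (-1 : ℂ) ≠ 0)) (zpow_ne_zero _ (hρ t))
      · exact_mod_cast Nat.cast_ne_zero.mpr (Nat.factorial_ne_zero _)
    · exact inv_ne_zero (hρ t)
  have key_bridge : ∀ (B : (i : Fin r) → Fin (k i) → ℤ → U) (a b : ℤ),
      (∑ i, ∑ j : Fin (k i),
          ((α i) ^ (-((j : ℕ) : ℤ)) / (Nat.factorial (j : ℕ) : ℂ)) •
            deltaTerm (α i) (j : ℕ) (B i j) a b)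
      = ∑ t : Σ i : Fin r, Fin (k i),
          gfun (ρ t) (d t) a • (cst t • B t.1 t.2 (a + b + (d t : ℤ) + 1)) := by
    intro B a b
    rw [← Finset.univ_sigma_univ, Finset.sum_sigma]
    refine Finset.sum_congr rfl fun i _ => Finset.sum_congr rfl fun j _ => ?_
    rw [deltaTerm_eq, smul_smul, smul_smul]
    congr 1
    show ((α i) ^ (-((j : ℕ) : ℤ)) / ((j : ℕ).factorial : ℂ))
        * (((-1) ^ (j : ℕ) * psi (j : ℕ) a) * (α i) ^ (-a - 1))
      = (psi (j : ℕ) a * (α i) ^ (-a)) * cst ⟨i, j⟩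
    rw [show (-a - 1 : ℤ) = -a + (-1) by ring, zpow_add₀ (hα i), zpow_neg_one]
    show _ = _ * (((-1) ^ ((j : ℕ)) * (α i) ^ (-((j : ℕ) : ℤ)) / (((j : ℕ)).factorial : ℂ)) * (α i)⁻¹)
    ring
  have poly_bridge : (polyLaurentAct p A = fun _ _ => 0)
      ↔ ∀ n : ℤ, (aeval (Sop U) p) (fun x => A x (n - x)) = 0 := by
    have hpt : ∀ a b : ℤ, polyLaurentAct p A a b
        = (aeval (Sop U) p) (fun x => A x (a + b - x)) a := by
      intro a b
      rw [aeval_Sop_apply]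
      unfold polyLaurentAct
      refine Finset.sum_congr rfl fun s _ => ?_
      rw [show a + b - (a - (s : ℤ)) = b + s from by ring]
    constructor
    · intro h n
      funext a
      have h2 := congrFun (congrFun h a) (n - a)
      rw [hpt a (n - a)] at h2
      simpa only [show a + (n - a) = n from by ring, Pi.zero_apply] using h2
    · intro h
      funext a b
      rw [hpt a b]
      have := congrFun (h (a + b)) a
      simpa using this
  refine ⟨⟨?_, ?_⟩, ?_⟩
  · -- kernel → existence of B
    intro h
    have hex : ∀ n : ℤ, ∃ w : (Σ i : Fin r, Fin (k i)) → U,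
        (fun x => A x (n - x)) = fun a => ∑ t, gfun (ρ t) (d t) a • w t :=
      fun n => existence ρ d hρ hpair p hdvd h0 hN hcard _ (poly_bridge.mp h n)
    choose w hw using hex
    refine ⟨fun i j mm => (cst ⟨i, j⟩)⁻¹ • w (mm - ((j : ℕ) : ℤ) - 1) ⟨i, j⟩, ?_⟩
    funext a b
    show A a b = _
    rw [key_bridge]
    have h1 := congrFun (hw (a + b)) a
    simp only [show a + b - a = b from by ring] at h1
    rw [h1]
    refine Finset.sum_congr rfl fun t _ => ?_
    simp only [Sigma.eta]
    have harg : a + b + ((d t : ℕ) : ℤ) + 1 - ((t.2 : ℕ) : ℤ) - 1 = a + b := by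
      simp only [hddef]
      ring
    rw [harg, smul_inv_smul₀ (hcstne t)]
  · -- existence of B → kernel
    rintro ⟨B, hB⟩
    apply poly_bridge.mpr
    intro n
    have hfn : (fun x => A x (n - x))
        = fun x => ∑ t : Σ i : Fin r, Fin (k i),
            gfun (ρ t) (d t) x • (cst t • B t.1 t.2 (n + (d t : ℤ) + 1)) := by
      funext x
      simp only [hB]
      rw [key_bridge]
      simp only [show x + (n - x) = n from by ring]
    rw [hfn]
    exact kernel_sum ρ d hρ p hdvd _
  · -- uniqueness
    intro B B' hB hB'
    funext i j mm
    set n := mm - ((j : ℕ) : ℤ) - 1 with hn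
    have hz : (fun a => ∑ t : Σ i : Fin r, Fin (k i),
        gfun (ρ t) (d t) a •
          (cst t • B t.1 t.2 (n + (d t : ℤ) + 1) - cst t • B' t.1 t.2 (n + (d t : ℤ) + 1))) = 0 := by
      funext a
      have e1 := congrFun (congrFun hB a) (n - a)
      have e2 := congrFun (congrFun hB' a) (n - a)
      simp only [key_bridge] at e1 e2
      simp only [show a + (n - a) = n from by ring] at e1 e2
      simp only [smul_sub]
      rw [Finset.sum_sub_distrib, ← e1, ← e2, sub_self]
      rfl
    have hq := sum_gfun_eq_zero ρ d hρ hpair _ hz ⟨i, j⟩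
    rw [sub_eq_zero] at hq
    have h3 := congrArg (fun x => (cst ⟨i, j⟩)⁻¹ • x) hq
    simp only [inv_smul_smul₀ (hcstne ⟨i, j⟩)] at h3
    rwa [show n + ((j : ℕ) : ℤ) + 1 = mm from by rw [hn]; ring] at h3
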